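/- Let 𝒞 be a finitely complete category in which strong epimorphisms are stable under pullback. Suppose given morphisms f_b : R → B, f_j : R → X and f_k : R → W such that f_k is a strong epimorphism and the induced morphism ⟨f_b, f_j⟩ : R → B × X is a monomorphism. Let s₁ : S → X be a strong epimorphism and s₂ : S → X′ a monomorphism, and let R̃, with projections s̃₁ : R̃ → R and f̃_j : R̃ → S, be a pullback of f_j and s₁. Then f_k ∘ s̃₁ : R̃ → W is a strong epimorphism and the induced morphism ⟨f_b ∘ s̃₁, s₂ ∘ f̃_j⟩ : R̃ → B × X′ is a monomorphism. -/

import Mathlib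

open CategoryTheory Limits

/-- In a finitely complete category in which strong epimorphisms are
stable under pullback: if `f_k : R ⟶ W` is a strong epimorphism, `⟨f_b, f_j⟩ : R ⟶ B ⨯ X`
is a monomorphism, `s₁ : S ⟶ X` is a strong epimorphism, `s₂ : S ⟶ X′` is a monomorphism,
and `R̃` (with projections `s̃₁`, `f̃_j`) is a pullback of `f_j` and `s₁`, then
`f_k ∘ s̃₁` is a strong epimorphism and `⟨f_b ∘ s̃₁, s₂ ∘ f̃_j⟩ : R̃ ⟶ B ⨯ X′` is a
monomorphism. -/
theorem stmt3 {𝒞 : Type*} [Category 𝒞] [HasFiniteLimits 𝒞]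
    (hstab : ∀ ⦃W X Y Z : 𝒞⦄ (fst : W ⟶ X) (snd : W ⟶ Y) (f : X ⟶ Z) (g : Y ⟶ Z),
      IsPullback fst snd f g → StrongEpi g → StrongEpi fst)
    {R B X W S X' R' : 𝒞}
    (f_b : R ⟶ B) (f_j : R ⟶ X) (f_k : R ⟶ W)
    (hfk : StrongEpi f_k) (hmono : Mono (prod.lift f_b f_j))
    (s₁ : S ⟶ X) (s₂ : S ⟶ X')
    (hs₁ : StrongEpi s₁) (hs₂ : Mono s₂)
    (s'₁ : R' ⟶ R) (f'_j : R' ⟶ S)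
    (hpb : IsPullback s'₁ f'_j f_j s₁) :
    StrongEpi (s'₁ ≫ f_k) ∧ Mono (prod.lift (s'₁ ≫ f_b) (f'_j ≫ s₂)) := by
  constructor
  · haveI h1 : StrongEpi s'₁ := hstab s'₁ f'_j f_j s₁ hpb hs₁
    haveI := hfk
    exact strongEpi_comp s'₁ f_k
  · constructor
    intro Z a b h
    have hB : a ≫ s'₁ ≫ f_b = b ≫ s'₁ ≫ f_b := by
      have := congrArg (· ≫ prod.fst) h
      simpa [prod.lift_fst] using this
    have hX' : a ≫ f'_j ≫ s₂ = b ≫ f'_j ≫ s₂ := by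
      have := congrArg (· ≫ prod.snd) h
      simpa [prod.lift_snd] using this
    have hfj : a ≫ f'_j = b ≫ f'_j := by
      haveI := hs₂
      rw [← cancel_mono s₂]
      simpa using hX'
    have hs : a ≫ s'₁ = b ≫ s'₁ := by
      haveI := hmono
      rw [← cancel_mono (prod.lift f_b f_j)]
      apply Limits.prod.hom_ext
      · simpa [prod.lift_fst] using hB
      · have : a ≫ s'₁ ≫ f_j = b ≫ s'₁ ≫ f_j := by
          rw [hpb.w, reassoc_of% hfj]
        simpa [prod.lift_snd] using this
    exact hpb.hom_ext hs hfj
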